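/- Let F be a feed-forward neural network in F²(a,b), i.e. a finite composition F = S^m ∘ F^m ∘ ... ∘ S¹ ∘ F¹ where each F^k : ℝ^{n_{k−1}} → ℝ^{n_k} is real analytic and each S^k applies, to each component independently, either the identity or the ReLU function. Then the hyperrectangle [x̄, x'] can be partitioned into a nonempty set U and its boundary ∂U, where F is real analytic on U, U is open with respect to the usual topology of the dimension of [x̄, x'], and ∂U has Lebesgue measure 0. -/

import Mathlib

open MeasureTheory

/-- A feed-forward neural network architecture from `ℝ^k` to `ℝ^r`: a finite
composition `S^m ∘ F^m ∘ ... ∘ S¹ ∘ F¹`, where each `F^j` is an arbitrary (layer)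
function and each `S^j` applies, to each component independently (as recorded by a
Boolean vector), either the identity or the ReLU function. -/
inductive NN : ℕ → ℕ → Type where
  | input (k : ℕ) : NN k k
  | layer {k l r : ℕ} (prev : NN k l) (F : (Fin l → ℝ) → (Fin r → ℝ)) (s : Fin r → Bool) :
      NN k r

/-- Evaluation of a network: each layer applies `F` and then, componentwise,
either ReLU (`max · 0`) or the identity. -/
noncomputable def NN.eval : {k r : ℕ} → NN k r → (Fin k → ℝ) → Fin r → ℝ
  | _, _, .input _, x => x
  | _, _, .layer prev F s, x => fun i =>
      if s i then max (F (NN.eval prev x) i) 0 else F (NN.eval prev x) i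

/-- All layer functions of the network are real analytic (on all of `ℝ^l`). -/
def NN.IsAnalytic : {k r : ℕ} → NN k r → Prop
  | _, _, .input _ => True
  | _, _, .layer prev F _ =>
      prev.IsAnalytic ∧ ∀ i, AnalyticOnNhd ℝ (fun x => F x i) Set.univ

open Set Filter

namespace ReluAux

variable {ι : Type*} [Fintype ι] [DecidableEq ι]

/-- Chain of coordinate partial derivatives. -/
noncomputable def pderiv : List ι → ((ι → ℝ) → ℝ) → ((ι → ℝ) → ℝ)
  | [], g => g
  | i :: L, g => fun x => fderiv ℝ (pderiv L g) x (Pi.single i 1)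

lemma pderiv_analytic {W : Set (ι → ℝ)} {g : (ι → ℝ) → ℝ}
    (hg : AnalyticOnNhd ℝ g W) : ∀ L : List ι, AnalyticOnNhd ℝ (pderiv L g) W := by
  intro L
  induction L with
  | nil => exact hg
  | cons i L ih =>
      have h1 : AnalyticOnNhd ℝ (fderiv ℝ (pderiv L g)) W := ih.fderiv
      have := (ContinuousLinearMap.apply ℝ ℝ (Pi.single i 1 : ι → ℝ)).comp_analyticOnNhd h1
      exact this

lemma iteratedFDeriv_basis {W : Set (ι → ℝ)} (hW : IsOpen W) {g : (ι → ℝ) → ℝ}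
    (hg : AnalyticOnNhd ℝ g W) :
    ∀ (n : ℕ) (r : Fin n → ι) (x : ι → ℝ), x ∈ W →
      iteratedFDeriv ℝ n g x (fun j => Pi.single (r j) 1) = pderiv (List.ofFn r) g x := by
  intro n
  induction n with
  | zero =>
      intro r x hx
      simp [pderiv, iteratedFDeriv_zero_apply]
  | succ n ih =>
      intro r x hx
      have hdiff : DifferentiableAt ℝ (iteratedFDeriv ℝ n g) x :=
        ((hg.iteratedFDeriv n) x hx).differentiableAt
      have hLhs : iteratedFDeriv ℝ (n+1) g x (fun j => Pi.single (r j) 1)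
          = fderiv ℝ (fun y => iteratedFDeriv ℝ n g y (fun j => Pi.single (r j.succ) 1)) x
              (Pi.single (r 0) 1) := by
        rw [iteratedFDeriv_succ_apply_left]
        rw [fderiv_continuousMultilinear_apply_const_apply hdiff]
        rfl
      have hEq : (fun y => iteratedFDeriv ℝ n g y (fun j => Pi.single (r j.succ) 1))
          =ᶠ[nhds x] pderiv (List.ofFn (fun j => r j.succ)) g := by
        filter_upwards [hW.mem_nhds hx] with y hy
        exact ih (fun j => r j.succ) y hy
      rw [hLhs, hEq.fderiv_eq]
      rw [List.ofFn_succ]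
      rfl

lemma eventually_zero_of_pderiv {W : Set (ι → ℝ)} (hW : IsOpen W) {g : (ι → ℝ) → ℝ}
    (hg : AnalyticOnNhd ℝ g W) {x : ι → ℝ} (hx : x ∈ W)
    (h : ∀ L : List ι, pderiv L g x = 0) : ∀ᶠ y in nhds x, g y = 0 := by
  have hzero : ∀ (n : ℕ) (y : ι → ℝ), iteratedFDeriv ℝ n g x (fun _ => y) = 0 := by
    intro n y
    have hy : y = ∑ i : ι, y i • (Pi.single i 1 : ι → ℝ) := by
      funext j
      rw [Finset.sum_apply]
      simp [Pi.single_apply, Finset.sum_ite_eq' Finset.univ j]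
    calc iteratedFDeriv ℝ n g x (fun _ => y)
        = iteratedFDeriv ℝ n g x (fun _ => ∑ i : ι, y i • (Pi.single i 1 : ι → ℝ)) := by
          rw [← hy]
      _ = ∑ r : Fin n → ι, iteratedFDeriv ℝ n g x
            (fun j => y (r j) • (Pi.single (r j) 1 : ι → ℝ)) := by
          exact (iteratedFDeriv ℝ n g x).toMultilinearMap.map_sum
            (fun _ i => y i • (Pi.single i 1 : ι → ℝ))
      _ = 0 := by
          apply Finset.sum_eq_zero
          intro r _
          rw [(iteratedFDeriv ℝ n g x).map_smul_univ]
          rw [iteratedFDeriv_basis hW hg n r x hx, h (List.ofFn r), smul_zero]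
  obtain ⟨p, hp⟩ := hg x hx
  obtain ⟨r, hpr⟩ := hp
  filter_upwards [EMetric.ball_mem_nhds x hpr.r_pos] with z hz
  have hzy : z - x ∈ Metric.eball (0 : ι → ℝ) r := by
    simpa [edist_eq_enorm_sub] using hz
  have hs := hpr.hasSum_iteratedFDeriv hzy
  have hs0 : HasSum (fun n : ℕ => ((n.factorial : ℝ)⁻¹ •
      iteratedFDeriv ℝ n g x fun _ => z - x : ℝ)) 0 := by
    have : (fun n : ℕ => ((n.factorial : ℝ)⁻¹ • iteratedFDeriv ℝ n g x fun _ => z - x : ℝ))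
        = fun _ => (0 : ℝ) := by
      funext n
      rw [hzero n (z - x)]
      simp
    rw [this]
    exact hasSum_zero
  have := hs.unique hs0
  simpa using this

lemma countable_isolated {T : Set ℝ} (h : ∀ t ∈ T, ∀ᶠ s in nhdsWithin t {t}ᶜ, s ∉ T) :
    T.Countable := by
  have hd : DiscreteTopology T := by
    rw [discreteTopology_subtype_iff]
    intro t ht
    rw [← Filter.empty_mem_iff_bot]
    have := h t ht
    rw [Filter.eventually_iff] at this
    rw [Filter.mem_inf_iff]
    exact ⟨{s | s ∉ T}, this, T, Filter.mem_principal_self T, by ext s; simp⟩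
  exact (HereditarilyLindelof_LindelofSets T).countable hd

lemma slice_null (i : ι) {W : Set (ι → ℝ)} (hW : IsOpen W) {g : (ι → ℝ) → ℝ}
    (hg : AnalyticOnNhd ℝ g W) :
    volume {x | x ∈ W ∧ g x = 0 ∧ fderiv ℝ g x (Pi.single i 1) ≠ 0} = 0 := by
  classical
  set dg : (ι → ℝ) → ℝ := fun x => fderiv ℝ g x (Pi.single i 1) with hdg_def
  set S : Set (ι → ℝ) := {x | x ∈ W ∧ g x = 0 ∧ dg x ≠ 0} with hS_def
  -- measurability
  have hgc : ContinuousOn g W := hg.continuousOn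
  have hdgc : ContinuousOn dg W := by
    have : AnalyticOnNhd ℝ dg W :=
      (ContinuousLinearMap.apply ℝ ℝ (Pi.single i 1 : ι → ℝ)).comp_analyticOnNhd hg.fderiv
    exact this.continuousOn
  have hA : IsOpen (W ∩ dg ⁻¹' {(0:ℝ)}ᶜ) :=
    hdgc.isOpen_inter_preimage hW isOpen_compl_singleton
  have hB : IsOpen (W ∩ g ⁻¹' {(0:ℝ)}ᶜ) :=
    hgc.isOpen_inter_preimage hW isOpen_compl_singleton
  have hSeq : S = (W ∩ dg ⁻¹' {(0:ℝ)}ᶜ) \ (W ∩ g ⁻¹' {(0:ℝ)}ᶜ) := by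
    ext x
    simp only [hS_def, mem_setOf_eq, mem_diff, mem_inter_iff, mem_preimage, mem_compl_iff,
      mem_singleton_iff]
    tauto
  have hSm : MeasurableSet S := by
    rw [hSeq]; exact (hA.measurableSet).diff hB.measurableSet
  -- product decomposition
  set p : ι → Prop := fun j => j ≠ i with hp_def
  haveI : Unique {j // ¬ p j} := by
    refine ⟨⟨⟨i, by simp [hp_def]⟩⟩, ?_⟩
    rintro ⟨j, hj⟩
    simp [hp_def, not_not] at hj
    simp [hj]
  set e := MeasurableEquiv.piEquivPiSubtypeProd (fun _ : ι => ℝ) p with he_def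
  have pe : MeasurePreserving e volume volume :=
    volume_preserving_piEquivPiSubtypeProd (fun _ : ι => ℝ) p
  have hSim : MeasurableSet (e '' S) := e.measurableEmbedding.measurableSet_image.2 hSm
  have hkey : volume (e '' S) = 0 := by
    rw [show (volume : Measure (({j // p j} → ℝ) × ({j // ¬ p j} → ℝ)))
      = (volume : Measure ({j // p j} → ℝ)).prod (volume : Measure ({j // ¬ p j} → ℝ)) from rfl]
    rw [MeasureTheory.Measure.measure_prod_null hSim]
    refine Filter.Eventually.of_forall (fun y => ?_)
    -- slice at y
    set ρ : ℝ → (ι → ℝ) := fun t => e.symm (y, fun _ => t) with hρ_def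
    have hρ_apply : ∀ t j, ρ t j = if h : p j then y ⟨j, h⟩ else t := by
      intro t j
      simp [hρ_def, he_def, MeasurableEquiv.piEquivPiSubtypeProd,
        Equiv.piEquivPiSubtypeProd_symm_apply]
    set T : Set ℝ := {t | ρ t ∈ S} with hT_def
    have hTiso : ∀ t ∈ T, ∀ᶠ s in nhdsWithin t {t}ᶜ, s ∉ T := by
      intro t ht
      have hx₀ : ρ t ∈ S := ht
      obtain ⟨hx₀W, hx₀g, hx₀dg⟩ := hx₀
      -- the curve
      have hcurve : ∀ s : ℝ, ρ s = ρ t + (s - t) • (Pi.single i 1 : ι → ℝ) := by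
        intro s
        funext j
        rw [Pi.add_apply, Pi.smul_apply, hρ_apply, hρ_apply]
        by_cases hj : p j
        · rw [dif_pos hj, dif_pos hj,
            Pi.single_eq_of_ne (show j ≠ i by simpa [hp_def] using hj) 1]
          simp
        · have hji : j = i := by simpa [hp_def, not_not] using hj
          subst hji
          rw [dif_neg hj, dif_neg hj, Pi.single_eq_same, smul_eq_mul]
          ring
      have hdψ : HasDerivAt (fun s => g (ρ s)) (dg (ρ t)) t := by
        have hc : HasDerivAt (fun s : ℝ => ρ t + (s - t) • (Pi.single i 1 : ι → ℝ))
            (Pi.single i 1 : ι → ℝ) t := by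
          have h1 : HasDerivAt (fun s : ℝ => (s - t)) 1 t :=
            (hasDerivAt_id t).sub_const t
          have h2 := h1.smul_const (Pi.single i 1 : ι → ℝ)
          simpa using h2.const_add (ρ t)
        have hc' : HasDerivAt ρ (Pi.single i 1 : ι → ℝ) t :=
          hc.congr_of_eventuallyEq (Filter.Eventually.of_forall hcurve)
        have hgd : HasFDerivAt g (fderiv ℝ g (ρ t)) (ρ t) :=
          ((hg (ρ t) hx₀W).differentiableAt).hasFDerivAt
        have := hgd.comp_hasDerivAt t hc'
        exact this
      have := hdψ.eventually_ne (c := g (ρ t)) hx₀dg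
      filter_upwards [this] with s hs hsT
      exact hs (by simpa [hx₀g] using (hsT.2.1 : g (ρ s) = 0))
    have hTc : T.Countable := countable_isolated hTiso
    -- the slice is a preimage of T under evaluation
    have hslice : Prod.mk y ⁻¹' (e '' S) ⊆ (fun z : {j // ¬ p j} → ℝ => z default) ⁻¹' T := by
      intro z hz
      rcases hz with ⟨x, hxS, hxe⟩
      have hzx : e.symm (y, z) = x := by rw [← hxe]; exact e.symm_apply_apply x
      have hzc : z = fun _ => z default := by
        funext j; rw [Unique.eq_default j]
      simp only [mem_preimage, hT_def, mem_setOf_eq, hρ_def]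
      rw [← hzc, hzx]
      exact hxS
    refine measure_mono_null hslice ?_
    have hinj : Function.Injective (fun z : {j // ¬ p j} → ℝ => z default) := by
      intro z z' hzz
      funext j; rw [Unique.eq_default j]
      exact hzz
    have : ((fun z : {j // ¬ p j} → ℝ => z default) ⁻¹' T).Countable :=
      hTc.preimage hinj
    exact this.measure_zero _
  have : volume S = volume (e '' S) := by
    rw [← pe.measure_preimage hSim.nullMeasurableSet]
    congr 1
    exact (e.toEquiv.preimage_image S).symm
  rw [this, hkey]

lemma null_bad_set {W : Set (ι → ℝ)} (hW : IsOpen W) {g : (ι → ℝ) → ℝ}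
    (hg : AnalyticOnNhd ℝ g W) :
    volume {x | x ∈ W ∧ g x = 0 ∧ ¬ ∀ᶠ y in nhds x, g y = 0} = 0 := by
  have hsub : {x | x ∈ W ∧ g x = 0 ∧ ¬ ∀ᶠ y in nhds x, g y = 0}
      ⊆ ⋃ q : List ι × ι, {x | x ∈ W ∧ pderiv q.1 g x = 0 ∧
          fderiv ℝ (pderiv q.1 g) x (Pi.single q.2 1) ≠ 0} := by
    rintro x ⟨hxW, hxg, hxne⟩
    have hex : ∃ n : ℕ, ∃ L : List ι, L.length = n ∧ pderiv L g x ≠ 0 := by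
      by_contra hcon
      push_neg at hcon
      exact hxne (eventually_zero_of_pderiv hW hg hxW (fun L => hcon L.length L rfl))
    classical
    obtain ⟨L, hLlen, hLne⟩ := Nat.find_spec hex
    cases L with
    | nil => exact absurd hxg (by simpa [pderiv] using hLne)
    | cons i L' =>
      have hL' : pderiv L' g x = 0 := by
        by_contra hne
        have hlt : L'.length < Nat.find hex := by rw [← hLlen]; simp
        exact Nat.find_min hex hlt ⟨L', rfl, hne⟩
      refine mem_iUnion.2 ⟨(L', i), hxW, hL', ?_⟩
      simpa [pderiv] using hLne
  refine measure_mono_null hsub (measure_iUnion_null fun q => ?_)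
  exact slice_null q.2 hW (pderiv_analytic hg q.1)

lemma relu_step {W : Set (ι → ℝ)} (hW : IsOpen W) {h : (ι → ℝ) → ℝ}
    (hh : AnalyticOnNhd ℝ h W) :
    ∃ W' : Set (ι → ℝ), W' ⊆ W ∧ IsOpen W' ∧ volume (W \ W') = 0 ∧
      AnalyticOnNhd ℝ (fun x => max (h x) 0) W' := by
  refine ⟨(W ∩ h ⁻¹' {(0:ℝ)}ᶜ) ∪ (W ∩ {x | ∀ᶠ y in nhds x, h y = 0}), ?_, ?_, ?_, ?_⟩
  · exact union_subset inter_subset_left inter_subset_left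
  · exact IsOpen.union (hh.continuousOn.isOpen_inter_preimage hW isOpen_compl_singleton)
      (hW.inter isOpen_setOf_eventually_nhds)
  · refine measure_mono_null (fun x hx => ?_) (null_bad_set hW hh)
    obtain ⟨hxW, hxn⟩ := hx
    simp only [mem_union, mem_inter_iff, mem_preimage, mem_compl_iff, mem_singleton_iff,
      mem_setOf_eq, not_or, not_and] at hxn
    refine ⟨hxW, ?_, hxn.2 hxW⟩
    by_contra hne
    exact (hxn.1 hxW) hne
  · rintro x (⟨hxW, hxne⟩ | ⟨hxW, hxev⟩)
    · rcases lt_or_gt_of_ne (by simpa using hxne : h x ≠ 0) with hlt | hgt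
      · have hev : ∀ᶠ y in nhds x, h y < 0 :=
          (hh x hxW).continuousAt.eventually_lt_const hlt
        refine (analyticAt_const (v := (0:ℝ))).congr ?_
        filter_upwards [hev] with y hy
        simp [max_eq_right hy.le]
      · have hev : ∀ᶠ y in nhds x, 0 < h y :=
          (hh x hxW).continuousAt.eventually_const_lt hgt
        refine (hh x hxW).congr ?_
        filter_upwards [hev] with y hy
        simp [max_eq_left hy.le]
    · refine (analyticAt_const (v := (0:ℝ))).congr ?_
      filter_upwards [hxev] with y hy
      simp [hy]

lemma net_refine {k r : ℕ} (net : NN k r) : net.IsAnalytic →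
    ∀ (ψ : (ι → ℝ) → (Fin k → ℝ)), (∀ j, AnalyticOnNhd ℝ (fun z => ψ z j) univ) →
    ∀ (W : Set (ι → ℝ)), IsOpen W →
    ∃ W' : Set (ι → ℝ), W' ⊆ W ∧ IsOpen W' ∧ volume (W \ W') = 0 ∧
      ∀ i, AnalyticOnNhd ℝ (fun z => net.eval (ψ z) i) W' := by
  induction net with
  | input =>
      intro _ ψ hψ W hW
      refine ⟨W, subset_rfl, hW, by simp, fun i => ?_⟩
      have : (fun z => NN.eval (NN.input _) (ψ z) i) = fun z => ψ z i := by
        funext z; simp [NN.eval]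
      rw [this]
      exact (hψ i).mono (subset_univ W)
  | layer prev Fl s ih =>
      intro hnet ψ hψ W hW
      have hnet' : prev.IsAnalytic ∧ ∀ i, AnalyticOnNhd ℝ (fun x => Fl x i) univ := by
        rw [NN.IsAnalytic] at hnet; exact hnet
      obtain ⟨W₁, hW₁sub, hW₁open, hW₁null, hW₁an⟩ := ih hnet'.1 ψ hψ W hW
      have hg : AnalyticOnNhd ℝ (fun z => prev.eval (ψ z)) W₁ := by
        exact analyticOnNhd_pi_iff.2 hW₁an
      have hpre : ∀ i, AnalyticOnNhd ℝ (fun z => Fl (prev.eval (ψ z)) i) W₁ := by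
        intro i
        exact (hnet'.2 i).comp hg (mapsTo_univ _ _)
      have hstep : ∀ i, ∃ V : Set (ι → ℝ), V ⊆ W₁ ∧ IsOpen V ∧ volume (W₁ \ V) = 0 ∧
          AnalyticOnNhd ℝ (fun z => (NN.layer prev Fl s).eval (ψ z) i) V := by
        intro i
        by_cases hsi : s i
        · obtain ⟨V, h1, h2, h3, h4⟩ := relu_step hW₁open (hpre i)
          refine ⟨V, h1, h2, h3, ?_⟩
          have : (fun z => (NN.layer prev Fl s).eval (ψ z) i)
              = fun z => max (Fl (prev.eval (ψ z)) i) 0 := by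
            funext z; simp [NN.eval, hsi]
          rw [this]; exact h4
        · refine ⟨W₁, subset_rfl, hW₁open, by simp, ?_⟩
          have : (fun z => (NN.layer prev Fl s).eval (ψ z) i)
              = fun z => Fl (prev.eval (ψ z)) i := by
            funext z; simp [NN.eval, hsi]
          rw [this]; exact hpre i
      choose V hV1 hV2 hV3 hV4 using hstep
      refine ⟨W₁ ∩ ⋂ i, V i, inter_subset_left.trans hW₁sub,
        hW₁open.inter (isOpen_iInter_of_finite hV2), ?_, ?_⟩
      · refine measure_mono_null (fun x hx => ?_)
          (measure_union_null hW₁null (measure_iUnion_null fun i => hV3 i))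
        obtain ⟨hxW, hxn⟩ := hx
        by_cases hxW₁ : x ∈ W₁
        · right
          simp only [mem_inter_iff, mem_iInter, not_and, not_forall] at hxn
          obtain ⟨i, hi⟩ := hxn hxW₁
          exact mem_iUnion.2 ⟨i, hxW₁, hi⟩
        · exact Or.inl ⟨hxW, hxW₁⟩
      · intro i
        exact (hV4 i).mono (inter_subset_right.trans (iInter_subset _ i))

lemma mem_uIcc_pi {κ : Type*} {p q x : κ → ℝ} :
    x ∈ Set.uIcc p q ↔ ∀ i, x i ∈ Set.uIcc (p i) (q i) := by
  simp only [Set.uIcc, Set.mem_Icc, Pi.le_def, Pi.inf_apply, Pi.sup_apply]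
  constructor
  · rintro ⟨h1, h2⟩ i; exact ⟨h1 i, h2 i⟩
  · intro h; exact ⟨fun i => (h i).1, fun i => (h i).2⟩

end ReluAux

open ReluAux

/-- **Topology of ReLU networks (Lemma 2 of Lundstrom et al.)**: for a feed-forward
network `F ∈ F²(a,b)` (real analytic layers interleaved with componentwise
identity/ReLU), the hyperrectangle `[x̄, x']` can be partitioned into a nonempty set `U`
and its complement `∂U = [x̄,x'] \ U`, where `F` is real analytic on `U`, `U` is
relatively open in `[x̄, x']` (the topology of the dimension of `[x̄, x']`), and `∂U`
has measure `0` with respect to the Hausdorff measure of the dimension of `[x̄, x']`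
(the number of coordinates in which `x̄` and `x'` differ). -/
theorem relu_network_topology {n : ℕ} (a b : Fin n → ℝ)
    (net : NN n 1) (hnet : net.IsAnalytic)
    (F : (Fin n → ℝ) → ℝ) (hF : ∀ x ∈ Set.uIcc a b, F x = net.eval x 0)
    (xbar x' : Fin n → ℝ) (hxbar : xbar ∈ Set.uIcc a b) (hx' : x' ∈ Set.uIcc a b) :
    ∃ U : Set (Fin n → ℝ),
      U ⊆ Set.uIcc xbar x' ∧ U.Nonempty ∧
      (∃ V : Set (Fin n → ℝ), IsOpen V ∧ U = V ∩ Set.uIcc xbar x') ∧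
      AnalyticOn ℝ F U ∧
      μH[((Finset.univ.filter fun i => xbar i ≠ x' i).card : ℝ)]
        (Set.uIcc xbar x' \ U) = 0 := by
  set D : Finset (Fin n) := Finset.univ.filter fun i => xbar i ≠ x' i with hD_def
  set R : Set (Fin n → ℝ) := Set.uIcc xbar x' with hR_def
  have hRab : R ⊆ Set.uIcc a b := Set.uIcc_subset_uIcc hxbar hx'
  have hnotD : ∀ i : Fin n, i ∉ D → xbar i = x' i := by
    intro i hi
    by_contra hne
    exact hi (by simp [hD_def, hne])
  set π : (Fin n → ℝ) → ({i // i ∈ D} → ℝ) := fun x j => x j.1 with hπ_def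
  set emb : ({i // i ∈ D} → ℝ) → (Fin n → ℝ) :=
    fun z i => if h : i ∈ D then z ⟨i, h⟩ else xbar i with hemb_def
  have hπemb : ∀ z, π (emb z) = z := by
    intro z; funext j
    simp [hπ_def, hemb_def, j.2]
  have hembπ : ∀ x ∈ R, emb (π x) = x := by
    intro x hx
    funext i
    by_cases hi : i ∈ D
    · simp [hemb_def, hπ_def, hi]
    · have h1 : x i ∈ Set.uIcc (xbar i) (x' i) := mem_uIcc_pi.1 hx i
      rw [← hnotD i hi, Set.uIcc_self] at h1
      simp [hemb_def, hi, h1.symm]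
  set Q : Set ({i // i ∈ D} → ℝ) := Set.uIcc (π xbar) (π x') with hQ_def
  have hembQ : ∀ z ∈ Q, emb z ∈ R := by
    intro z hz
    rw [hR_def, mem_uIcc_pi]
    intro i
    by_cases hi : i ∈ D
    · have := mem_uIcc_pi.1 hz ⟨i, hi⟩
      simpa [hemb_def, hπ_def, hi] using this
    · simp [hemb_def, hi, Set.left_mem_uIcc]
  have hπQ : ∀ x ∈ R, π x ∈ Q := by
    intro x hx
    rw [hQ_def, mem_uIcc_pi]
    intro j
    exact mem_uIcc_pi.1 hx j.1
  -- the open box inside Q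
  set O : Set ({i // i ∈ D} → ℝ) :=
    Set.pi Set.univ (fun j => Set.Ioo (xbar j.1 ⊓ x' j.1) (xbar j.1 ⊔ x' j.1)) with hO_def
  have hQpi : Q = Set.pi Set.univ (fun j => Set.Icc (xbar j.1 ⊓ x' j.1) (xbar j.1 ⊔ x' j.1)) := by
    rw [hQ_def, Set.uIcc, Set.pi_univ_Icc]
    rfl
  have hOopen : IsOpen O := isOpen_set_pi Set.finite_univ (fun j _ => isOpen_Ioo)
  have hOQ : O ⊆ Q := by
    rw [hQpi]
    exact Set.pi_mono fun j _ => Set.Ioo_subset_Icc_self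
  have hlt : ∀ j : {i // i ∈ D}, xbar j.1 ⊓ x' j.1 < xbar j.1 ⊔ x' j.1 := by
    intro j
    refine inf_lt_sup.2 ?_
    have hj := j.2
    simp only [hD_def, Finset.mem_filter, Finset.mem_univ, true_and] at hj
    exact hj
  have hvolO : volume O = ∏ j : {i // i ∈ D}, ENNReal.ofReal (xbar j.1 ⊔ x' j.1 - xbar j.1 ⊓ x' j.1) := by
    rw [hO_def, volume_pi_pi]
    simp [Real.volume_Ioo]
  have hvolQ : volume Q = ∏ j : {i // i ∈ D}, ENNReal.ofReal (xbar j.1 ⊔ x' j.1 - xbar j.1 ⊓ x' j.1) := by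
    rw [hQpi, volume_pi_pi]
    simp [Real.volume_Icc]
  have hOfin : volume O ≠ ⊤ := by
    rw [hvolO]
    exact (ENNReal.prod_lt_top fun j _ => ENNReal.ofReal_lt_top).ne
  have hOpos : volume O ≠ 0 := by
    rw [hvolO]
    refine (Finset.prod_ne_zero_iff).2 fun j _ => ?_
    exact (ENNReal.ofReal_pos.2 (sub_pos.2 (hlt j))).ne'
  have hQOnull : volume (Q \ O) = 0 := by
    have hd := measure_diff hOQ hOopen.measurableSet.nullMeasurableSet hOfin
    rw [hd, hvolO, hvolQ, tsub_self]
  -- analyticity of the embedding coordinates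
  have hψ : ∀ i : Fin n, AnalyticOnNhd ℝ (fun z : {i // i ∈ D} → ℝ => emb z i) univ := by
    intro i
    by_cases hi : i ∈ D
    · have : (fun z : {i // i ∈ D} → ℝ => emb z i) = fun z => z ⟨i, hi⟩ := by
        funext z; simp [hemb_def, hi]
      rw [this]
      exact (ContinuousLinearMap.proj ⟨i, hi⟩ :
        ({i // i ∈ D} → ℝ) →L[ℝ] ℝ).analyticOnNhd univ
    · have : (fun z : {i // i ∈ D} → ℝ => emb z i) = fun _ => xbar i := by
        funext z; simp [hemb_def, hi]
      rw [this]
      exact analyticOnNhd_const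
  obtain ⟨W', hW'O, hW'open, hW'null, hW'an⟩ := net_refine net hnet emb hψ O hOopen
  have hW'ne : W'.Nonempty := by
    by_contra hcon
    rw [not_nonempty_iff_eq_empty] at hcon
    rw [hcon, diff_empty] at hW'null
    exact hOpos hW'null
  -- the candidate set
  have hπcont : Continuous π := continuous_pi fun j => continuous_apply j.1
  refine ⟨π ⁻¹' W' ∩ R, inter_subset_right, ?_, ⟨π ⁻¹' W', hW'open.preimage hπcont, rfl⟩, ?_, ?_⟩
  · obtain ⟨z, hz⟩ := hW'ne
    refine ⟨emb z, ?_, hembQ z (hOQ (hW'O hz))⟩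
    simp only [Set.mem_preimage, hπemb z]
    exact hz
  · -- analyticity
    set πL : (Fin n → ℝ) →L[ℝ] ({i // i ∈ D} → ℝ) :=
      ContinuousLinearMap.pi (fun j : {i // i ∈ D} => ContinuousLinearMap.proj j.1) with hπL_def
    have hπLπ : ∀ x, πL x = π x := fun x => rfl
    have hcomp : AnalyticOnNhd ℝ ((fun z => net.eval (emb z) 0) ∘ π) (π ⁻¹' W') := by
      have := (hW'an 0).comp (πL.analyticOnNhd (π ⁻¹' W')) (fun x hx => hx)
      exact this
    refine ((hcomp.analyticOn).mono inter_subset_left).congr ?_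
    intro x hx
    have hxR : x ∈ R := hx.2
    have h1 : F x = net.eval x 0 := hF x (hRab hxR)
    have h2 : emb (π x) = x := hembπ x hxR
    simp only [Function.comp_apply, h1, h2]
  · -- Hausdorff measure
    have hiso : Isometry emb := by
      refine Isometry.of_dist_eq fun z z' => ?_
      rw [dist_pi_def, dist_pi_def]
      congr 1
      refine le_antisymm (Finset.sup_le fun i _ => ?_) (Finset.sup_le fun j _ => ?_)
      · by_cases hi : i ∈ D
        · have : emb z i = z ⟨i, hi⟩ ∧ emb z' i = z' ⟨i, hi⟩ := by
            constructor <;> simp [hemb_def, hi]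
          rw [this.1, this.2]
          exact Finset.le_sup (f := fun b => nndist (z b) (z' b)) (Finset.mem_univ _)
        · have : emb z i = xbar i ∧ emb z' i = xbar i := by
            constructor <;> simp [hemb_def, hi]
          rw [this.1, this.2, nndist_self]
          exact zero_le
      · have : nndist (z j) (z' j) = nndist (emb z j.1) (emb z' j.1) := by
          have h1 : emb z j.1 = z j := by simp [hemb_def, j.2]
          have h2 : emb z' j.1 = z' j := by simp [hemb_def, j.2]
          rw [h1, h2]
        rw [this]
        exact Finset.le_sup (f := fun b => nndist (emb z b) (emb z' b)) (Finset.mem_univ _)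
    have hsub : R \ (π ⁻¹' W' ∩ R) ⊆ emb '' (Q \ W') := by
      rintro x ⟨hxR, hxnU⟩
      have hπW' : π x ∉ W' := fun hc => hxnU ⟨hc, hxR⟩
      exact ⟨π x, ⟨hπQ x hxR, hπW'⟩, hembπ x hxR⟩
    refine measure_mono_null hsub ?_
    have hcard : ((D.card : ℝ)) = ((Fintype.card {i // i ∈ D} : ℕ) : ℝ) := by
      rw [Fintype.card_coe]
    rw [hcard]
    rw [hiso.hausdorffMeasure_image (Or.inl (by positivity)) (Q \ W')]
    rw [hausdorffMeasure_pi_real]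
    refine measure_mono_null (fun z hz => ?_)
      (measure_union_null hQOnull hW'null)
    by_cases hzO : z ∈ O
    · exact Or.inr ⟨hzO, hz.2⟩
    · exact Or.inl ⟨hz.1, hzO⟩
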